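/- Under the relations [X̃_a, X̃_N] = (α_a−β_a)X̃_N and X̃_a|V⟩ = (α_a−β_a)|V⟩, for any word (τ_1,...,τ_L) ∈ {1,...,N}^L one has ⟨W| X̃_{τ_1} ··· X̃_{τ_L} |V⟩ = (1 + Σ_{x=1}^L δ_{τ_x,N})! · ∏_{x=1}^L (α_{τ_x} − β_{τ_x})^{1−δ_{τ_x,N}} (1 + Σ_{j=x}^L δ_{τ_j,N})^{1−δ_{τ_x,N}}, where by convention α_N = β_N so factors with τ_x = N contribute 1. -/
import Mathlib


open scoped BigOperators
open Nat

section Aux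

variable {M : Type*} [AddCommGroup M] [Module ℝ M]

private lemma key_pow (N : ℕ) (X : Fin (N + 1) → Module.End ℝ M) (α β : Fin (N + 1) → ℝ)
    (V : M)
    (hcomm : ∀ a : Fin (N + 1),
      ⁅X a, X (Fin.last N)⁆ = (α a - β a) • X (Fin.last N))
    (hV : ∀ a : Fin N, X a.castSucc V = (α a.castSucc - β a.castSucc) • V)
    (a : Fin (N + 1)) (ha : a ≠ Fin.last N) (k : ℕ) :
    X a ((X (Fin.last N) ^ k) V)
      = ((α a - β a) * (k + 1)) • ((X (Fin.last N) ^ k) V) := by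
  obtain ⟨b, rfl⟩ := Fin.exists_castSucc_eq.mpr ha
  set c : ℝ := α b.castSucc - β b.castSucc with hcdef
  have hc : ∀ w : M, X b.castSucc (X (Fin.last N) w)
      = X (Fin.last N) (X b.castSucc w) + c • (X (Fin.last N) w) := by
    intro w
    have h := hcomm b.castSucc
    rw [Ring.lie_def] at h
    have h2 := congrArg (fun f : Module.End ℝ M => f w) h
    simp only [LinearMap.sub_apply, Module.End.mul_apply, LinearMap.smul_apply] at h2
    have h3 := eq_add_of_sub_eq h2
    rw [h3]; abel
  induction k with
  | zero => simpa using hV b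
  | succ k ih =>
    have hp : (X (Fin.last N) ^ (k + 1)) V
        = X (Fin.last N) ((X (Fin.last N) ^ k) V) := by
      rw [_root_.pow_succ']; simp [Module.End.mul_apply]
    rw [hp, hc, ih, map_smul]
    rw [← add_smul]
    congr 1
    push_cast
    ring

end Aux

theorem mpa_word_formula (N L : ℕ) {M : Type*} [AddCommGroup M] [Module ℝ M]
    (X : Fin (N + 1) → Module.End ℝ M) (α β : Fin (N + 1) → ℝ)
    (hNN : α (Fin.last N) = β (Fin.last N))
    (W : M →ₗ[ℝ] ℝ) (V : M)
    (hcomm : ∀ a : Fin (N + 1),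
      ⁅X a, X (Fin.last N)⁆ = (α a - β a) • X (Fin.last N))
    (hV : ∀ a : Fin N, X a.castSucc V = (α a.castSucc - β a.castSucc) • V)
    (hW : ∀ n : ℕ, W ((X (Fin.last N) ^ n) V) = ((n + 1)! : ℝ))
    (τ : Fin L → Fin (N + 1)) :
    W (((List.ofFn fun x => X (τ x)).prod) V)
      = (((1 + (Finset.univ.filter fun x : Fin L => τ x = Fin.last N).card)! : ℕ) : ℝ)
        * ∏ x : Fin L,
            ((α (τ x) - β (τ x)) ^ (if τ x = Fin.last N then 0 else 1)
              * ((1 + (Finset.univ.filter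
                    fun j : Fin L => x ≤ j ∧ τ j = Fin.last N).card : ℕ) : ℝ)
                ^ (if τ x = Fin.last N then 0 else 1)) := by
  -- main structural lemma
  have main : ∀ (L : ℕ) (τ : Fin L → Fin (N + 1)),
      ((List.ofFn fun x => X (τ x)).prod) V
        = (∏ x : Fin L,
            ((α (τ x) - β (τ x)) ^ (if τ x = Fin.last N then 0 else 1)
              * ((1 + (Finset.univ.filter
                    fun j : Fin L => x ≤ j ∧ τ j = Fin.last N).card : ℕ) : ℝ)
                ^ (if τ x = Fin.last N then 0 else 1)))
          • ((X (Fin.last N)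
              ^ (Finset.univ.filter fun x : Fin L => τ x = Fin.last N).card) V) := by
    intro L
    induction L with
    | zero => intro τ; simp
    | succ L IH =>
      intro τ
      have cardsum : ∀ (p : Fin (L + 1) → Prop) [DecidablePred p],
          (Finset.univ.filter p).card
            = (if p 0 then 1 else 0)
              + (Finset.univ.filter fun i : Fin L => p i.succ).card := by
        intro p _
        rw [Finset.card_filter, Fin.sum_univ_succ, ← Finset.card_filter]
      have hfull := cardsum (fun x => τ x = Fin.last N)
      have hsuffix0 : (Finset.univ.filter
            fun j : Fin (L + 1) => (0 : Fin (L + 1)) ≤ j ∧ τ j = Fin.last N).card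
          = (Finset.univ.filter fun x : Fin (L + 1) => τ x = Fin.last N).card := by
        congr 1
        apply Finset.filter_congr
        intro j _
        simp [Fin.zero_le]
      have hsuffixsucc : ∀ i : Fin L,
          (Finset.univ.filter
            fun j : Fin (L + 1) => i.succ ≤ j ∧ τ j = Fin.last N).card
          = (Finset.univ.filter
            fun j : Fin L => i ≤ j ∧ τ j.succ = Fin.last N).card := by
        intro i
        rw [cardsum (fun j => i.succ ≤ j ∧ τ j = Fin.last N)]
        have h0 : ¬ (i.succ ≤ (0 : Fin (L + 1))) := by
          simp [Fin.le_def]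
        simp only [h0, false_and, if_false, zero_add]
        congr 1
        apply Finset.filter_congr
        intro j _
        simp [Fin.succ_le_succ_iff]
      -- split the list and the product
      have hlist : (List.ofFn fun x : Fin (L + 1) => X (τ x)).prod
          = X (τ 0) * (List.ofFn fun x : Fin L => X (τ x.succ)).prod := by
        rw [List.ofFn_succ, List.prod_cons]
      rw [hlist, Module.End.mul_apply, IH (fun x => τ x.succ), map_smul]
      rw [Fin.prod_univ_succ]
      set S : ℝ := ∏ i : Fin L,
          ((α (τ i.succ) - β (τ i.succ)) ^ (if τ i.succ = Fin.last N then 0 else 1)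
            * ((1 + (Finset.univ.filter
                  fun j : Fin L => i ≤ j ∧ τ j.succ = Fin.last N).card : ℕ) : ℝ)
              ^ (if τ i.succ = Fin.last N then 0 else 1)) with hS
      have hprodtail : (∏ i : Fin L,
          ((α (τ i.succ) - β (τ i.succ)) ^ (if τ i.succ = Fin.last N then 0 else 1)
            * ((1 + (Finset.univ.filter
                  fun j : Fin (L + 1) => i.succ ≤ j ∧ τ j = Fin.last N).card : ℕ) : ℝ)
              ^ (if τ i.succ = Fin.last N then 0 else 1))) = S := by
        rw [hS]
        apply Finset.prod_congr rfl
        intro i _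
        rw [hsuffixsucc i]
      by_cases h0 : τ 0 = Fin.last N
      · have hm : (Finset.univ.filter fun x : Fin (L + 1) => τ x = Fin.last N).card
            = 1 + (Finset.univ.filter fun i : Fin L => τ i.succ = Fin.last N).card := by
          rw [hfull]; simp [h0]
        rw [hm, hprodtail, h0]
        simp only [if_pos rfl, if_true, pow_zero, one_mul]
        congr 1
        rw [add_comm 1, _root_.pow_succ', Module.End.mul_apply]
      · have hm : (Finset.univ.filter fun x : Fin (L + 1) => τ x = Fin.last N).card
            = (Finset.univ.filter fun i : Fin L => τ i.succ = Fin.last N).card := by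
          rw [hfull]; simp [h0]
        rw [hm, hprodtail]
        simp only [if_neg h0, pow_one]
        rw [key_pow N X α β V hcomm hV (τ 0) h0, smul_smul]
        congr 1
        rw [hsuffix0, hm]
        push_cast
        ring
  rw [main L τ, map_smul, hW]
  rw [smul_eq_mul]
  rw [add_comm 1]
  ring
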